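/- In the canonical extension setting, if Σ' ⊂ Σ is a totally geodesic submanifold of M̄ through p ∈ M intersecting M orthogonally with dim Σ' = codim_Σ M, then for each h ∈ H, h(Σ') is a totally geodesic submanifold through h(p) intersecting H·M orthogonally with dim h(Σ') = codim_{M̄}(H·M). Hence if M admits sections in Σ, then H·M admits sections in M̄. -/

import Mathlib

noncomputable section

open Module

/-- if `Σ' ⊆ Σ` is a totally geodesic submanifold of `M̄` through
`p ∈ M` meeting `M` orthogonally with `dim Σ' = codim_Σ M`, then for each `h ∈ H`,
`h(Σ')` is a totally geodesic submanifold through `h(p)` meeting `H·M`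
orthogonally with `dim h(Σ') = codim_{M̄}(H·M)`.  Hence if `M` admits sections in
`Σ`, then `H·M` admits sections in `M̄`.

Abstract model: points `P`, tangent vectors in a fixed finite-dimensional inner
product space `V`; `TotGeod S` means `S` is a totally geodesic submanifold of
`M̄`, and `TangentAt S q W` means the submanifold `S` has tangent space `W` at
`q`; both notions are preserved by the isometric `G`-action (differentials
`dg g p : V ≃ₗᵢ V`). -/
theorem canonical_extension_admits_sections
    {G P V : Type*} [Group G] [MulAction G P]
    [NormedAddCommGroup V] [InnerProductSpace ℝ V] [FiniteDimensional ℝ V]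
    (dg : G → P → (V ≃ₗᵢ[ℝ] V))
    (TotGeod : Set P → Prop)
    (TangentAt : Set P → P → Submodule ℝ V → Prop)
    -- isometries preserve total geodesy and tangent spaces
    (h_totgeod_equiv : ∀ (g : G) (S : Set P), TotGeod S → TotGeod ((g • ·) '' S))
    (h_tangent_equiv : ∀ (g : G) (S : Set P) (q : P) (W : Submodule ℝ V),
      TangentAt S q W →
      TangentAt ((g • ·) '' S) (g • q) (W.map (dg g q).toLinearEquiv.toLinearMap))
    -- the polar setting: section `Σ`, orbit tangent spaces, `M ⊆ Σ`, `H·M`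
    (Sset : Set P) (TS Torb : P → Submodule ℝ V)
    (h_polar : ∀ p ∈ Sset, Torb p = (TS p)ᗮ)
    (Mset : Set P) (hMS : Mset ⊆ Sset)
    (TM THM : P → Submodule ℝ V) (hTMS : ∀ p ∈ Mset, TM p ≤ TS p)
    (h_THM : ∀ (g : G), ∀ p ∈ Mset,
      THM (g • p) = (TM p ⊔ Torb p).map (dg g p).toLinearEquiv.toLinearMap)
    -- `M` admits sections in `Σ`: through each `p ∈ M` there is a totally
    -- geodesic `Σ' ⊆ Σ` meeting `M` orthogonally, of dimension `codim_Σ M`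
    (h_sections : ∀ p ∈ Mset, ∃ (S' : Set P) (W : Submodule ℝ V),
      S' ⊆ Sset ∧ TotGeod S' ∧ p ∈ S' ∧ TangentAt S' p W ∧
      W ≤ (TM p)ᗮ ⊓ TS p ∧
      finrank ℝ W = finrank ℝ (TS p) - finrank ℝ (TM p)) :
    -- `H·M` admits sections in `M̄`: through each point `h(p)` of `H·M` there is
    -- a totally geodesic submanifold (namely `h(Σ')`) meeting `H·M` orthogonally,
    -- of dimension `codim_{M̄}(H·M)`
    ∀ (g : G), ∀ p ∈ Mset, ∃ (S'' : Set P) (W' : Submodule ℝ V),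
      TotGeod S'' ∧ g • p ∈ S'' ∧ TangentAt S'' (g • p) W' ∧
      W' ≤ (THM (g • p))ᗮ ∧
      finrank ℝ W' = finrank ℝ V - finrank ℝ (THM (g • p)) := by
  intro g p hp
  obtain ⟨S', W, hS'S, hS'geod, hpS', htan, horth, hrank⟩ := h_sections p hp
  refine ⟨(g • ·) '' S', W.map (dg g p).toLinearEquiv.toLinearMap,
    h_totgeod_equiv g S' hS'geod, ⟨p, hpS', rfl⟩, h_tangent_equiv g S' p W htan, ?_, ?_⟩
  · rw [h_THM g p hp]
    rintro _ ⟨w, hw, rfl⟩ _ ⟨u, hu, rfl⟩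
    have : inner ℝ ((dg g p) u) ((dg g p) w) = (inner ℝ u w : ℝ) :=
      (dg g p).inner_map_map u w
    rw [show ((dg g p).toLinearEquiv.toLinearMap w) = (dg g p) w from rfl,
      show ((dg g p).toLinearEquiv.toLinearMap u) = (dg g p) u from rfl, this]
    -- u ∈ TM p ⊔ Torb p, w ∈ W ≤ (TM p)ᗮ ⊓ TS p, so ⟪u, w⟫ = 0
    have hw' := horth hw
    have hwTM : w ∈ (TM p)ᗮ := hw'.1
    have hwTS : w ∈ TS p := hw'.2
    have hTorb : Torb p = (TS p)ᗮ := h_polar p (hMS hp)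
    obtain ⟨x, hx, y, hy, rfl⟩ := Submodule.mem_sup.mp hu
    rw [inner_add_left, hwTM x hx, zero_add, real_inner_comm]
    exact (hTorb ▸ hy : y ∈ (TS p)ᗮ) w hwTS
  · rw [h_THM g p hp, LinearEquiv.finrank_map_eq, LinearEquiv.finrank_map_eq, hrank]
    have hdisj : TM p ⊓ Torb p = ⊥ := by
      rw [h_polar p (hMS hp), eq_bot_iff]
      rintro x ⟨hx1, hx2⟩
      have : inner ℝ x x = (0 : ℝ) := hx2 x (hTMS p hp hx1)
      simpa using inner_self_eq_zero.mp this
    have hsum : finrank ℝ (TM p ⊔ Torb p : Submodule ℝ V) =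
        finrank ℝ (TM p) + finrank ℝ (Torb p) := by
      have := Submodule.finrank_sup_add_finrank_inf_eq (TM p) (Torb p)
      rw [hdisj] at this
      simpa using this
    have horb : finrank ℝ (Torb p) = finrank ℝ V - finrank ℝ (TS p) := by
      rw [h_polar p (hMS hp)]
      have := Submodule.finrank_add_finrank_orthogonal (K := TS p)
      omega
    have hle1 : finrank ℝ (TM p) ≤ finrank ℝ (TS p) :=
      Submodule.finrank_mono (hTMS p hp)
    have hle2 : finrank ℝ (TS p) ≤ finrank ℝ V := (TS p).finrank_le
    omega
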